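/- Fix integers r ≥ 1 and q with 2 ≤ q ≤ r+1. There is a constant C (depending only on q and r) such that for all integers g ≥ 2, the sum over all tuples ((g₁,n₁),…,(g_q,n_q)) of pairs of nonnegative integers satisfying 2gᵢ + nᵢ ≥ 3 for each i, ∑gᵢ = g + q − r − 1, and ∑nᵢ = 2r, of the product ∏_{i: g_i ≥ 2} (gᵢ−1)^{2gᵢ−3+nᵢ}, divided by (g−1)^{2g−3}, is at most C·g^{1−q}. -/

import Mathlib

open Filter

open Finset

lemma lemA (r q g : ℕ) (hq : 2 ≤ q) (hqr : q ≤ r + 1) (hg : 2 ≤ g)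
    (f : Fin q → ℕ × ℕ)
    (h1 : ∀ i, 3 ≤ 2 * (f i).1 + (f i).2)
    (h2 : (∑ i, (f i).1) + r + 1 = g + q)
    (h3 : (∑ i, (f i).2) = 2 * r) :
    (∏ i : Fin q, if 2 ≤ (f i).1 then
        ((f i).1 - 1 : ℝ) ^ (2 * (f i).1 - 3 + (f i).2) else 1)
      ≤ 2 ^ (2 * q) * (((g : ℝ) - 1) ^ (2 * g - 3) * (((g : ℝ) - 1) ^ (q - 1))⁻¹) *
        ∑ i : Fin q, ∏ j ∈ univ.erase i, ((2 : ℝ) ^ (f j).1)⁻¹ := by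
  classical
  have hgR : (2:ℝ) ≤ (g:ℝ) := by exact_mod_cast hg
  have hg1 : (1:ℝ) ≤ (g:ℝ) - 1 := by linarith
  have hg0 : (0:ℝ) ≤ (g:ℝ) - 1 := by linarith
  have hsum : (∑ i, (f i).1) ≤ g := by omega
  have hgi : ∀ j, (f j).1 ≤ g := fun j =>
    le_trans (Finset.single_le_sum (f := fun i => (f i).1) (fun i _ => Nat.zero_le _)
      (mem_univ j)) hsum
  obtain ⟨i₀, -, hmax⟩ := Finset.exists_max_image univ (fun i => (f i).1)
    ⟨⟨0, by omega⟩, mem_univ _⟩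
  have hmax' : ∀ j, (f j).1 ≤ (f i₀).1 := fun j => hmax j (mem_univ j)
  have hpair : ∀ j, j ≠ i₀ → 2 * (f j).1 ≤ g := by
    intro j hj
    have h₁ : (f j).1 + (f i₀).1 ≤ ∑ i, (f i).1 := by
      have hss := Finset.sum_le_sum_of_subset (f := fun i => (f i).1)
        (Finset.subset_univ ({j, i₀} : Finset (Fin q)))
      rwa [Finset.sum_pair hj] at hss
    have := hmax' j
    omega
  set S := univ.filter (fun i : Fin q => 2 ≤ (f i).1) with hS
  set E := ∑ i ∈ S, (2 * (f i).1 - 3 + (f i).2) with hEdef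
  -- exponent bound
  have hEbound : E + q + 2 ≤ 2 * g := by
    have hP : ∑ i ∈ S, (2 * (f i).1 + (f i).2) = E + 3 * S.card := by
      have hc : ∀ i ∈ S, 2 * (f i).1 + (f i).2 = (2 * (f i).1 - 3 + (f i).2) + 3 := by
        intro i hi
        simp only [hS, mem_filter] at hi
        omega
      rw [Finset.sum_congr rfl hc, Finset.sum_add_distrib, Finset.sum_const, smul_eq_mul, hEdef]
      ring
    have hQ : 3 * (univ.filter (fun i : Fin q => ¬ 2 ≤ (f i).1)).card
        ≤ ∑ i ∈ univ.filter (fun i : Fin q => ¬ 2 ≤ (f i).1), (2 * (f i).1 + (f i).2) := by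
      have := Finset.card_nsmul_le_sum (univ.filter (fun i : Fin q => ¬ 2 ≤ (f i).1))
        (fun i => 2 * (f i).1 + (f i).2) 3 (fun x _ => h1 x)
      simpa [smul_eq_mul, mul_comm] using this
    have hsplit : ∑ i ∈ S, (2 * (f i).1 + (f i).2)
        + ∑ i ∈ univ.filter (fun i : Fin q => ¬ 2 ≤ (f i).1), (2 * (f i).1 + (f i).2)
        = ∑ i, (2 * (f i).1 + (f i).2) :=
      Finset.sum_filter_add_sum_filter_not univ _ _
    have htot : ∑ i, (2 * (f i).1 + (f i).2) = 2 * (∑ i, (f i).1) + ∑ i, (f i).2 := by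
      rw [Finset.sum_add_distrib, Finset.mul_sum]
    have hcard : S.card + (univ.filter (fun i : Fin q => ¬ 2 ≤ (f i).1)).card = q := by
      have := Finset.card_filter_add_card_filter_not (s := (univ : Finset (Fin q)))
        (p := fun i => 2 ≤ (f i).1)
      simpa using this
    omega
  -- the key pointwise bound
  have key : (∏ i : Fin q, if 2 ≤ (f i).1 then
        ((f i).1 - 1 : ℝ) ^ (2 * (f i).1 - 3 + (f i).2) else 1)
      ≤ 2 ^ (2 * q) * (((g : ℝ) - 1) ^ (2 * g - 3) * (((g : ℝ) - 1) ^ (q - 1))⁻¹) *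
        ∏ j ∈ univ.erase i₀, ((2 : ℝ) ^ (f j).1)⁻¹ := by
    have hfilter : (∏ i : Fin q, if 2 ≤ (f i).1 then
          ((f i).1 - 1 : ℝ) ^ (2 * (f i).1 - 3 + (f i).2) else 1)
        = ∏ i ∈ S, (((f i).1 : ℝ) - 1) ^ (2 * (f i).1 - 3 + (f i).2) := by
      rw [hS, Finset.prod_filter]
    rw [hfilter]
    have step1 : ∏ i ∈ S, (((f i).1 : ℝ) - 1) ^ (2 * (f i).1 - 3 + (f i).2)
        ≤ ∏ i ∈ S, ((((g:ℝ) - 1) * (if i = i₀ then 1 else 2⁻¹)) ^ (2 * (f i).1 - 3 + (f i).2)) := by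
      apply Finset.prod_le_prod
      · intro i hi
        simp only [hS, mem_filter] at hi
        have : (2:ℝ) ≤ ((f i).1 : ℝ) := by exact_mod_cast hi.2
        exact pow_nonneg (by linarith) _
      · intro i hi
        simp only [hS, mem_filter] at hi
        apply pow_le_pow_left₀
        · have : (2:ℝ) ≤ ((f i).1 : ℝ) := by exact_mod_cast hi.2
          linarith
        · by_cases hii : i = i₀
          · rw [if_pos hii, mul_one]
            have : ((f i).1 : ℝ) ≤ (g:ℝ) := by exact_mod_cast hgi i
            linarith
          · rw [if_neg hii]
            have h2g : 2 * (f i).1 ≤ g := hpair i hii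
            have : 2 * ((f i).1 : ℝ) ≤ (g:ℝ) := by exact_mod_cast h2g
            linarith
    have step2 : ∏ i ∈ S, ((((g:ℝ) - 1) * (if i = i₀ then 1 else 2⁻¹)) ^ (2 * (f i).1 - 3 + (f i).2))
        = ((g:ℝ) - 1) ^ E * ∏ i ∈ S, ((if i = i₀ then (1:ℝ) else 2⁻¹) ^ (2 * (f i).1 - 3 + (f i).2)) := by
      simp_rw [mul_pow]
      rw [Finset.prod_mul_distrib, Finset.prod_pow_eq_pow_sum, hEdef]
    have step4 : ∏ i ∈ S, ((if i = i₀ then (1:ℝ) else 2⁻¹) ^ (2 * (f i).1 - 3 + (f i).2))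
        ≤ 2 ^ (2 * q) * ∏ j ∈ univ.erase i₀, ((2 : ℝ) ^ (f j).1)⁻¹ := by
      have expand : ∏ i ∈ S, ((if i = i₀ then (1:ℝ) else 2⁻¹) ^ (2 * (f i).1 - 3 + (f i).2))
          = ∏ i : Fin q, (if 2 ≤ (f i).1 then
              ((if i = i₀ then (1:ℝ) else 2⁻¹) ^ (2 * (f i).1 - 3 + (f i).2)) else 1) := by
        rw [hS, Finset.prod_filter]
      rw [expand]
      have hw : ∀ i : Fin q, (if 2 ≤ (f i).1 then
            ((if i = i₀ then (1:ℝ) else 2⁻¹) ^ (2 * (f i).1 - 3 + (f i).2)) else 1)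
          ≤ (if i = i₀ then (1:ℝ) else 4 * ((2:ℝ) ^ (f i).1)⁻¹) := by
        intro i
        by_cases hii : i = i₀
        · simp [hii]
        · rw [if_neg hii]
          have hpow_pos : (0:ℝ) < (2:ℝ) ^ (f i).1 := by positivity
          by_cases h2i : 2 ≤ (f i).1
          · rw [if_pos h2i, if_neg hii]
            have h1e : (f i).1 - 1 ≤ 2 * (f i).1 - 3 + (f i).2 := by omega
            have hle : ((2:ℝ)⁻¹) ^ (2 * (f i).1 - 3 + (f i).2) ≤ ((2:ℝ)⁻¹) ^ ((f i).1 - 1) :=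
              pow_le_pow_of_le_one (by norm_num) (by norm_num) h1e
            have hsucc : (f i).1 = ((f i).1 - 1) + 1 := by omega
            have heq : ((2:ℝ)⁻¹) ^ ((f i).1 - 1) = 2 * ((2:ℝ) ^ (f i).1)⁻¹ := by
              rw [← inv_pow]
              rw [hsucc, pow_succ]
              field_simp
              simp
            calc ((2:ℝ)⁻¹) ^ (2 * (f i).1 - 3 + (f i).2)
                ≤ ((2:ℝ)⁻¹) ^ ((f i).1 - 1) := hle
              _ = 2 * ((2:ℝ) ^ (f i).1)⁻¹ := heq
              _ ≤ 4 * ((2:ℝ) ^ (f i).1)⁻¹ := by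
                  have : (0:ℝ) ≤ ((2:ℝ) ^ (f i).1)⁻¹ := by positivity
                  linarith
          · rw [if_neg hii, if_neg h2i]
            have hle1 : (f i).1 ≤ 1 := by omega
            have h2le : (2:ℝ) ^ (f i).1 ≤ 2 := by
              calc (2:ℝ) ^ (f i).1 ≤ (2:ℝ) ^ 1 := pow_le_pow_right₀ one_le_two hle1
                _ = 2 := pow_one 2
            have : (2:ℝ)⁻¹ ≤ ((2:ℝ) ^ (f i).1)⁻¹ := by
              apply inv_anti₀ hpow_pos h2le
            linarith
      calc ∏ i : Fin q, (if 2 ≤ (f i).1 then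
              ((if i = i₀ then (1:ℝ) else 2⁻¹) ^ (2 * (f i).1 - 3 + (f i).2)) else 1)
          ≤ ∏ i : Fin q, (if i = i₀ then (1:ℝ) else 4 * ((2:ℝ) ^ (f i).1)⁻¹) := by
            apply Finset.prod_le_prod
            · intro i _
              by_cases hii : i = i₀ <;> by_cases h2i : 2 ≤ (f i).1 <;>
                simp [hii, h2i] <;> positivity
            · intro i _; exact hw i
        _ = ∏ j ∈ univ.erase i₀, (4 * ((2:ℝ) ^ (f j).1)⁻¹) := by
            rw [← Finset.mul_prod_erase univ _ (mem_univ i₀), if_pos rfl, one_mul]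
            exact Finset.prod_congr rfl (fun j hj => if_neg (Finset.mem_erase.mp hj).1)
        _ = 4 ^ (univ.erase i₀).card * ∏ j ∈ univ.erase i₀, ((2:ℝ) ^ (f j).1)⁻¹ := by
            rw [Finset.prod_mul_distrib, Finset.prod_const]
        _ ≤ 2 ^ (2 * q) * ∏ j ∈ univ.erase i₀, ((2:ℝ) ^ (f j).1)⁻¹ := by
            apply mul_le_mul_of_nonneg_right
            · have hc : (univ.erase i₀).card ≤ q :=
                le_trans (Finset.card_le_card (Finset.erase_subset _ _)) (by simp)
              have h4 : (4:ℝ) ^ (univ.erase i₀).card ≤ (4:ℝ) ^ q :=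
                pow_le_pow_right₀ (by norm_num) hc
              have h42 : ((4:ℝ)) ^ q = 2 ^ (2 * q) := by rw [pow_mul]; norm_num
              rw [← h42]; exact h4
            · exact Finset.prod_nonneg (fun j _ => by positivity)
    have step5 : ((g:ℝ) - 1) ^ E ≤ ((g : ℝ) - 1) ^ (2 * g - 3) * (((g : ℝ) - 1) ^ (q - 1))⁻¹ := by
      rw [← div_eq_mul_inv, le_div_iff₀ (by positivity)]
      rw [← pow_add]
      exact pow_le_pow_right₀ hg1 (by omega)
    calc ∏ i ∈ S, (((f i).1 : ℝ) - 1) ^ (2 * (f i).1 - 3 + (f i).2)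
        ≤ ∏ i ∈ S, ((((g:ℝ) - 1) * (if i = i₀ then 1 else 2⁻¹)) ^ (2 * (f i).1 - 3 + (f i).2)) :=
          step1
      _ = ((g:ℝ) - 1) ^ E * ∏ i ∈ S, ((if i = i₀ then (1:ℝ) else 2⁻¹) ^ (2 * (f i).1 - 3 + (f i).2)) :=
          step2
      _ ≤ ((g:ℝ) - 1) ^ E * (2 ^ (2 * q) * ∏ j ∈ univ.erase i₀, ((2 : ℝ) ^ (f j).1)⁻¹) := by
          apply mul_le_mul_of_nonneg_left step4 (pow_nonneg hg0 E)
      _ ≤ (((g : ℝ) - 1) ^ (2 * g - 3) * (((g : ℝ) - 1) ^ (q - 1))⁻¹)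
            * (2 ^ (2 * q) * ∏ j ∈ univ.erase i₀, ((2 : ℝ) ^ (f j).1)⁻¹) := by
          apply mul_le_mul_of_nonneg_right step5
          have : (0:ℝ) ≤ ∏ j ∈ univ.erase i₀, ((2 : ℝ) ^ (f j).1)⁻¹ :=
            Finset.prod_nonneg (fun j _ => by positivity)
          positivity
      _ = 2 ^ (2 * q) * (((g : ℝ) - 1) ^ (2 * g - 3) * (((g : ℝ) - 1) ^ (q - 1))⁻¹) *
            ∏ j ∈ univ.erase i₀, ((2 : ℝ) ^ (f j).1)⁻¹ := by ring
  -- conclude by bounding the single term by the sum over i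
  refine le_trans key ?_
  apply mul_le_mul_of_nonneg_left
  · apply Finset.single_le_sum (f := fun i => ∏ j ∈ univ.erase i, ((2 : ℝ) ^ (f j).1)⁻¹)
      (fun i _ => Finset.prod_nonneg (fun j _ => by positivity)) (mem_univ i₀)
  · have h1 : (0:ℝ) ≤ (((g : ℝ) - 1) ^ (q - 1))⁻¹ := by positivity
    positivity

lemma lemB {X : Type*} [Fintype X] (r q g : ℕ) (i : Fin q) (F : X → Fin q → ℕ × ℕ)
    (hFinj : Function.Injective F)
    (hF2 : ∀ x, (∑ k, (F x k).1) + r + 1 = g + q)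
    (hF3 : ∀ x, (∑ k, (F x k).2) = 2 * r) :
    (∑ x : X, ∏ j ∈ univ.erase i, ((2 : ℝ) ^ (F x j).1)⁻¹) ≤ (4 * (r:ℝ) + 2) ^ q := by
  classical
  set Φ : X → (Fin q → ℕ × ℕ) := fun x => Function.update (F x) i (0, 0) with hΦ
  set W : (Fin q → ℕ × ℕ) → ℝ := fun y => ∏ j ∈ univ.erase i, ((2 : ℝ) ^ (y j).1)⁻¹ with hW
  have hWnonneg : ∀ y, 0 ≤ W y := fun y => Finset.prod_nonneg (fun j _ => by positivity)
  have hinj : ∀ x ∈ (univ : Finset X), ∀ y ∈ (univ : Finset X), Φ x = Φ y → x = y := by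
    intro x _ y _ h
    have hrest : ∀ k, k ≠ i → F x k = F y k := by
      intro k hk
      have hck : Function.update (F x) i (0, 0) k = Function.update (F y) i (0, 0) k :=
        congrFun h k
      rwa [Function.update_of_ne hk, Function.update_of_ne hk] at hck
    apply hFinj
    funext j
    by_cases hj : j = i
    · subst hj
      have e1 : ∑ k ∈ univ.erase j, (F x k).1 = ∑ k ∈ univ.erase j, (F y k).1 :=
        Finset.sum_congr rfl (fun k hk => by rw [hrest k (Finset.mem_erase.mp hk).1])
      have e2 : ∑ k ∈ univ.erase j, (F x k).2 = ∑ k ∈ univ.erase j, (F y k).2 :=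
        Finset.sum_congr rfl (fun k hk => by rw [hrest k (Finset.mem_erase.mp hk).1])
      have d1x : (F x j).1 + ∑ k ∈ univ.erase j, (F x k).1 = ∑ k, (F x k).1 :=
        Finset.add_sum_erase univ (fun k => (F x k).1) (mem_univ j)
      have d1y : (F y j).1 + ∑ k ∈ univ.erase j, (F y k).1 = ∑ k, (F y k).1 :=
        Finset.add_sum_erase univ (fun k => (F y k).1) (mem_univ j)
      have d2x : (F x j).2 + ∑ k ∈ univ.erase j, (F x k).2 = ∑ k, (F x k).2 :=
        Finset.add_sum_erase univ (fun k => (F x k).2) (mem_univ j)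
      have d2y : (F y j).2 + ∑ k ∈ univ.erase j, (F y k).2 = ∑ k, (F y k).2 :=
        Finset.add_sum_erase univ (fun k => (F y k).2) (mem_univ j)
      have hx2 := hF2 x
      have hy2 := hF2 y
      have hx3 := hF3 x
      have hy3 := hF3 y
      exact Prod.ext (by omega) (by omega)
    · exact hrest j hj
  have hstep1 : (∑ x : X, W (F x)) = ∑ x : X, W (Φ x) := by
    apply Finset.sum_congr rfl
    intro x _
    simp only [hW, hΦ]
    apply Finset.prod_congr rfl
    intro j hj
    rw [Function.update_of_ne (Finset.mem_erase.mp hj).1]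
  have hstep2 : (∑ x : X, W (Φ x)) = ∑ z ∈ (univ : Finset X).image Φ, W z :=
    (Finset.sum_image hinj).symm
  set t : Fin q → Finset (ℕ × ℕ) := fun j =>
    if j = i then {((0:ℕ), (0:ℕ))} else (Finset.range (g + q + 1)) ×ˢ (Finset.range (2 * r + 1))
    with ht
  have hsubset : (univ : Finset X).image Φ ⊆ Fintype.piFinset t := by
    intro z hz
    rw [Finset.mem_image] at hz
    obtain ⟨x, -, rfl⟩ := hz
    rw [Fintype.mem_piFinset]
    intro j
    by_cases hj : j = i
    · subst hj
      simp [ht, hΦ]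
    · rw [ht]
      simp only [if_neg hj]
      rw [hΦ]
      simp only [Function.update_of_ne hj]
      rw [Finset.mem_product, Finset.mem_range, Finset.mem_range]
      constructor
      · have hle := Finset.single_le_sum (f := fun k => (F x k).1) (fun k _ => Nat.zero_le _)
          (mem_univ j)
        have hx2 := hF2 x
        have : (F x j).1 ≤ ∑ k, (F x k).1 := hle
        omega
      · have hle := Finset.single_le_sum (f := fun k => (F x k).2) (fun k _ => Nat.zero_le _)
          (mem_univ j)
        have hx3 := hF3 x
        have : (F x j).2 ≤ ∑ k, (F x k).2 := hle
        omega
  have hstep3 : ∑ z ∈ (univ : Finset X).image Φ, W z ≤ ∑ z ∈ Fintype.piFinset t, W z :=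
    Finset.sum_le_sum_of_subset_of_nonneg hsubset (fun z _ _ => hWnonneg z)
  set v : Fin q → ℕ × ℕ → ℝ := fun j y => if j = i then 1 else ((2:ℝ) ^ y.1)⁻¹ with hv
  have hWv : ∀ z : Fin q → ℕ × ℕ, W z = ∏ j : Fin q, v j (z j) := by
    intro z
    rw [← Finset.mul_prod_erase univ (fun j => v j (z j)) (mem_univ i)]
    have h1 : v i (z i) = 1 := by simp [hv]
    rw [h1, one_mul]
    simp only [hW]
    refine Finset.prod_congr rfl (fun j hj => ?_)
    simp [hv, (Finset.mem_erase.mp hj).1]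
  have hstep4 : ∑ z ∈ Fintype.piFinset t, W z = ∏ j : Fin q, ∑ y ∈ t j, v j y := by
    rw [Finset.prod_univ_sum t v]
    exact Finset.sum_congr rfl (fun z _ => hWv z)
  have hfactor : ∀ j : Fin q, ∑ y ∈ t j, v j y ≤ 4 * (r:ℝ) + 2 := by
    intro j
    by_cases hj : j = i
    · subst hj
      simp only [ht, hv, if_pos rfl]
      simp only [Finset.sum_singleton]
      nlinarith [Nat.cast_nonneg (α := ℝ) r]
    · simp only [ht, hv, if_neg hj]
      rw [Finset.sum_product]
      have : ∀ a ∈ Finset.range (g + q + 1),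
          ∑ _b ∈ Finset.range (2 * r + 1), ((2:ℝ) ^ a)⁻¹ = (2 * (r:ℝ) + 1) * ((2:ℝ) ^ a)⁻¹ := by
        intro a _
        rw [Finset.sum_const, Finset.card_range, nsmul_eq_mul]
        push_cast
        ring
      rw [Finset.sum_congr rfl this, ← Finset.mul_sum]
      have hgeo : ∑ a ∈ Finset.range (g + q + 1), ((2:ℝ) ^ a)⁻¹ ≤ 2 := by
        have h2 := sum_geometric_two_le (g + q + 1)
        calc ∑ a ∈ Finset.range (g + q + 1), ((2:ℝ) ^ a)⁻¹
            = ∑ a ∈ Finset.range (g + q + 1), ((1:ℝ) / 2) ^ a := by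
              apply Finset.sum_congr rfl
              intro a _
              rw [one_div, inv_pow]
          _ ≤ 2 := h2
      have hgeo0 : (0:ℝ) ≤ ∑ a ∈ Finset.range (g + q + 1), ((2:ℝ) ^ a)⁻¹ :=
        Finset.sum_nonneg (fun a _ => by positivity)
      have hr1 : (0:ℝ) ≤ 2 * (r:ℝ) + 1 := by positivity
      nlinarith
  have hfinal : ∏ j : Fin q, ∑ y ∈ t j, v j y ≤ (4 * (r:ℝ) + 2) ^ q := by
    calc ∏ j : Fin q, ∑ y ∈ t j, v j y ≤ ∏ _j : Fin q, (4 * (r:ℝ) + 2) := by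
          apply Finset.prod_le_prod
          · intro j _
            apply Finset.sum_nonneg
            intro y _
            rw [hv]
            by_cases hj : j = i <;> simp [hj] <;> positivity
          · intro j _
            exact hfactor j
      _ = (4 * (r:ℝ) + 2) ^ q := by
          rw [Finset.prod_const]
          simp
  calc (∑ x : X, W (F x)) = ∑ z ∈ (univ : Finset X).image Φ, W z := by rw [hstep1, hstep2]
    _ ≤ ∑ z ∈ Fintype.piFinset t, W z := hstep3
    _ = ∏ j : Fin q, ∑ y ∈ t j, v j y := hstep4
    _ ≤ (4 * (r:ℝ) + 2) ^ q := hfinal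

/-- Key combinatorial estimate for separating multicurves: for fixed `r ≥ 1` and
`2 ≤ q ≤ r+1`, there is a constant `C` such that for all `g ≥ 2`, the sum over all
tuples `((g₁,n₁),…,(g_q,n_q))` with `2gᵢ+nᵢ ≥ 3`, `∑gᵢ = g+q−r−1`, `∑nᵢ = 2r` of
`∏_{i : gᵢ ≥ 2} (gᵢ−1)^{2gᵢ−3+nᵢ}`, divided by `(g−1)^{2g−3}`, is at most `C·g^{1−q}`. -/
theorem stmt_18 (r q : ℕ) (hr : 1 ≤ r) (hq : 2 ≤ q) (hqr : q ≤ r + 1) :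
    ∃ C : ℝ, 0 < C ∧ ∀ g : ℕ, 2 ≤ g →
      (∑' f : {f : Fin q → ℕ × ℕ //
          (∀ i, 3 ≤ 2 * (f i).1 + (f i).2) ∧
          (∑ i, (f i).1) + r + 1 = g + q ∧
          (∑ i, (f i).2) = 2 * r},
        (∏ i : Fin q, if 2 ≤ (f.1 i).1 then
            ((f.1 i).1 - 1 : ℝ) ^ (2 * (f.1 i).1 - 3 + (f.1 i).2) else 1)) /
        ((g : ℝ) - 1) ^ (2 * g - 3)
      ≤ C * (g : ℝ) ^ ((1 : ℤ) - q) := by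
  classical
  refine ⟨2 ^ (3 * q) * q * (4 * (r:ℝ) + 2) ^ q, ?_, ?_⟩
  · have hq0 : (0:ℝ) < (q:ℝ) := by exact_mod_cast (by omega : 0 < q)
    positivity
  intro g hg
  have hfin : Finite {f : Fin q → ℕ × ℕ //
      (∀ i, 3 ≤ 2 * (f i).1 + (f i).2) ∧
      (∑ i, (f i).1) + r + 1 = g + q ∧
      (∑ i, (f i).2) = 2 * r} := by
    have hset : {f : Fin q → ℕ × ℕ |
        (∀ i, 3 ≤ 2 * (f i).1 + (f i).2) ∧
        (∑ i, (f i).1) + r + 1 = g + q ∧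
        (∑ i, (f i).2) = 2 * r}.Finite := by
      apply Set.Finite.subset (Set.Finite.pi
        (t := fun _ : Fin q => (Set.Iic (g + q)) ×ˢ (Set.Iic (2 * r)))
        (fun _ => Set.Finite.prod (Set.finite_Iic _) (Set.finite_Iic _)))
      intro f hf
      simp only [Set.mem_setOf_eq] at hf
      rw [Set.mem_pi]
      intro j _
      rw [Set.mem_prod]
      constructor
      · have hle : (f j).1 ≤ ∑ k, (f k).1 :=
          Finset.single_le_sum (f := fun k => (f k).1) (fun k _ => Nat.zero_le _)
            (Finset.mem_univ j)
        have h2 := hf.2.1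
        simp only [Set.mem_Iic]
        omega
      · have hle : (f j).2 ≤ ∑ k, (f k).2 :=
          Finset.single_le_sum (f := fun k => (f k).2) (fun k _ => Nat.zero_le _)
            (Finset.mem_univ j)
        have h3 := hf.2.2
        simp only [Set.mem_Iic]
        omega
    exact hset.to_subtype
  haveI := Fintype.ofFinite {f : Fin q → ℕ × ℕ //
      (∀ i, 3 ≤ 2 * (f i).1 + (f i).2) ∧
      (∑ i, (f i).1) + r + 1 = g + q ∧
      (∑ i, (f i).2) = 2 * r}
  rw [tsum_fintype]
  have hgR : (2:ℝ) ≤ (g:ℝ) := by exact_mod_cast hg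
  have hg1pos : (0:ℝ) < (g:ℝ) - 1 := by linarith
  have hD : (0:ℝ) < ((g:ℝ) - 1) ^ (2 * g - 3) := pow_pos hg1pos _
  rw [div_le_iff₀ hD]
  set B : ℝ := 2 ^ (2 * q) * (((g : ℝ) - 1) ^ (2 * g - 3) * (((g : ℝ) - 1) ^ (q - 1))⁻¹)
    with hB
  have hBnonneg : (0:ℝ) ≤ B := by
    apply mul_nonneg (by positivity)
    exact mul_nonneg hD.le (inv_nonneg.mpr (pow_nonneg (by linarith) _))
  have hzg : (g : ℝ) ^ ((1 : ℤ) - q) = (((g:ℝ)) ^ (q - 1 : ℕ))⁻¹ := by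
    rw [← zpow_natCast (g:ℝ) (q - 1), ← zpow_neg]
    congr 1
    omega
  have hkey : (((g : ℝ) - 1) ^ (q - 1 : ℕ))⁻¹ ≤ 2 ^ q * ((g : ℝ) ^ ((1 : ℤ) - q)) := by
    rw [hzg]
    have hgpos : (0:ℝ) < (g:ℝ) := by linarith
    have ha : ((g:ℝ) - 1)⁻¹ ≤ 2 * ((g:ℝ))⁻¹ := by
      have h1 : (g:ℝ) / 2 ≤ (g:ℝ) - 1 := by linarith
      have h2 : ((g:ℝ) / 2)⁻¹ = 2 * ((g:ℝ))⁻¹ := by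
        field_simp
      calc ((g:ℝ) - 1)⁻¹ ≤ ((g:ℝ) / 2)⁻¹ := inv_anti₀ (by linarith) h1
        _ = 2 * ((g:ℝ))⁻¹ := h2
    calc (((g : ℝ) - 1) ^ (q - 1 : ℕ))⁻¹
        = (((g:ℝ) - 1)⁻¹) ^ (q - 1 : ℕ) := (inv_pow _ _).symm
      _ ≤ (2 * ((g:ℝ))⁻¹) ^ (q - 1 : ℕ) :=
          pow_le_pow_left₀ (inv_nonneg.mpr hg1pos.le) ha _
      _ = 2 ^ (q - 1 : ℕ) * (((g:ℝ)) ^ (q - 1 : ℕ))⁻¹ := by rw [mul_pow, inv_pow]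
      _ ≤ 2 ^ q * (((g:ℝ)) ^ (q - 1 : ℕ))⁻¹ := by
          apply mul_le_mul_of_nonneg_right (pow_le_pow_right₀ one_le_two (by omega))
          positivity
  calc (∑ x : {f : Fin q → ℕ × ℕ //
          (∀ i, 3 ≤ 2 * (f i).1 + (f i).2) ∧
          (∑ i, (f i).1) + r + 1 = g + q ∧
          (∑ i, (f i).2) = 2 * r},
        (∏ i : Fin q, if 2 ≤ (x.1 i).1 then
            ((x.1 i).1 - 1 : ℝ) ^ (2 * (x.1 i).1 - 3 + (x.1 i).2) else 1))
      ≤ ∑ x : {f : Fin q → ℕ × ℕ //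
          (∀ i, 3 ≤ 2 * (f i).1 + (f i).2) ∧
          (∑ i, (f i).1) + r + 1 = g + q ∧
          (∑ i, (f i).2) = 2 * r},
          B * ∑ i : Fin q, ∏ j ∈ univ.erase i, ((2 : ℝ) ^ (x.1 j).1)⁻¹ := by
        apply Finset.sum_le_sum
        intro x _
        exact lemA r q g hq hqr hg x.1 x.2.1 x.2.2.1 x.2.2.2
    _ = B * ∑ i : Fin q, ∑ x : {f : Fin q → ℕ × ℕ //
          (∀ i, 3 ≤ 2 * (f i).1 + (f i).2) ∧
          (∑ i, (f i).1) + r + 1 = g + q ∧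
          (∑ i, (f i).2) = 2 * r},
          ∏ j ∈ univ.erase i, ((2 : ℝ) ^ (x.1 j).1)⁻¹ := by
        rw [← Finset.mul_sum, Finset.sum_comm]
    _ ≤ B * ∑ _i : Fin q, (4 * (r:ℝ) + 2) ^ q := by
        apply mul_le_mul_of_nonneg_left _ hBnonneg
        apply Finset.sum_le_sum
        intro i _
        exact lemB r q g i Subtype.val Subtype.val_injective
          (fun x => x.2.2.1) (fun x => x.2.2.2)
    _ = B * ((q:ℝ) * (4 * (r:ℝ) + 2) ^ q) := by
        rw [Finset.sum_const, Finset.card_univ, Fintype.card_fin, nsmul_eq_mul]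
    _ ≤ 2 ^ (3 * q) * q * (4 * (r:ℝ) + 2) ^ q * (g : ℝ) ^ ((1 : ℤ) - q) *
          ((g : ℝ) - 1) ^ (2 * g - 3) := by
        rw [hB]
        have hK : (0:ℝ) ≤ 2 ^ (2 * q) * ((q:ℝ) * (4 * (r:ℝ) + 2) ^ q) *
            ((g : ℝ) - 1) ^ (2 * g - 3) := by positivity
        calc 2 ^ (2 * q) * (((g : ℝ) - 1) ^ (2 * g - 3) * (((g : ℝ) - 1) ^ (q - 1))⁻¹) *
              ((q:ℝ) * (4 * (r:ℝ) + 2) ^ q)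
            = (2 ^ (2 * q) * ((q:ℝ) * (4 * (r:ℝ) + 2) ^ q) *
                ((g : ℝ) - 1) ^ (2 * g - 3)) * (((g : ℝ) - 1) ^ (q - 1))⁻¹ := by ring
          _ ≤ (2 ^ (2 * q) * ((q:ℝ) * (4 * (r:ℝ) + 2) ^ q) *
                ((g : ℝ) - 1) ^ (2 * g - 3)) * (2 ^ q * ((g : ℝ) ^ ((1 : ℤ) - q))) :=
              mul_le_mul_of_nonneg_left hkey hK
          _ = 2 ^ (3 * q) * q * (4 * (r:ℝ) + 2) ^ q * (g : ℝ) ^ ((1 : ℤ) - q) *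
                ((g : ℝ) - 1) ^ (2 * g - 3) := by
              rw [show (3 : ℕ) * q = 2 * q + q by ring, pow_add]
              ring
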